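/- Let s > 1 be real and let a : ℕ → ℂ satisfy ∑_{n∈ℕ} (1+n)^{2s}|a(n)|² < ∞. Then ∑_{k∈ℕ} ( ∑_{ℓ∈ℕ} |a(k+ℓ)|² )^{1/2} ≤ ( s/(s−1) )^{1/2} · ( ∑_{n∈ℕ} (1+n)^{2s}·|a(n)|² )^{1/2}. -/

import Mathlib

open scoped BigOperators

private lemma zeta_partial_bound {p : ℝ} (hp : 1 < p) (N : ℕ) :
    ∑ k ∈ Finset.range N, (1 + (k : ℝ)) ^ (-p) ≤ p / (p - 1) := by
  have hp0 : (0:ℝ) < p - 1 := by linarith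
  rcases N with _ | M
  · simp; positivity
  rw [Finset.sum_range_succ']
  have h0 : (1 + ((0:ℕ):ℝ)) ^ (-p) = 1 := by
    norm_num
  have hmid : ∑ i ∈ Finset.range M, (1 + ((i + 1 : ℕ) : ℝ)) ^ (-p) ≤ 1 / (p - 1) := by
    have hanti : AntitoneOn (fun x : ℝ => x ^ (-p)) (Set.Icc 1 (1 + (M:ℝ))) := by
      intro x hx y hy hxy
      exact Real.rpow_le_rpow_of_nonpos (lt_of_lt_of_le zero_lt_one hx.1) hxy (by linarith)
    have hint := AntitoneOn.sum_le_integral (x₀ := (1:ℝ)) (a := M)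
      (f := fun x : ℝ => x ^ (-p)) hanti
    have hmem : (0:ℝ) ∉ Set.uIcc (1:ℝ) (1 + (M:ℝ)) := by
      rw [Set.uIcc_of_le (le_add_of_nonneg_right (Nat.cast_nonneg M))]
      norm_num [Set.mem_Icc]
    have hval : ∫ x in (1:ℝ)..(1 + (M:ℝ)), x ^ (-p) =
        ((1 + (M:ℝ)) ^ (-p + 1) - 1 ^ (-p + 1)) / (-p + 1) :=
      integral_rpow (Or.inr ⟨by intro h; rw [neg_eq_iff_eq_neg] at h; linarith, hmem⟩)
    have hx : (0:ℝ) ≤ (1 + (M:ℝ)) ^ (-p + 1) := Real.rpow_nonneg (by positivity) _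
    have heq : ((1 + (M:ℝ)) ^ (-p + 1) - 1 ^ (-p + 1)) / (-p + 1) =
        (1 - (1 + (M:ℝ)) ^ (-p + 1)) / (p - 1) := by
      rw [Real.one_rpow]
      rw [div_eq_div_iff (by linarith) (by linarith)]
      ring
    calc ∑ i ∈ Finset.range M, (1 + ((i + 1 : ℕ) : ℝ)) ^ (-p)
        ≤ ∫ x in (1:ℝ)..(1 + (M:ℝ)), x ^ (-p) := hint
      _ = (1 - (1 + (M:ℝ)) ^ (-p + 1)) / (p - 1) := by rw [hval, heq]
      _ ≤ 1 / (p - 1) := by gcongr; linarith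
  calc ∑ i ∈ Finset.range M, (1 + ((i + 1 : ℕ) : ℝ)) ^ (-p) + (1 + ((0:ℕ):ℝ)) ^ (-p)
      ≤ 1 / (p - 1) + 1 := by rw [h0]; linarith
    _ = p / (p - 1) := by field_simp; ring

/-- For real `s > 1` and `a : ℕ → ℂ` with `∑_n (1+n)^{2s}|a(n)|² < ∞`,
`∑_k (∑_ℓ |a(k+ℓ)|²)^{1/2} ≤ (s/(s−1))^{1/2} (∑_n (1+n)^{2s}|a(n)|²)^{1/2}`. -/
theorem hankel_trace_sobolev_bound (s : ℝ) (hs : 1 < s) (a : ℕ → ℂ)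
    (hsum : Summable fun n : ℕ => (1 + (n : ℝ)) ^ (2 * s) * ‖a n‖ ^ 2) :
    ∑' k : ℕ, Real.sqrt (∑' l : ℕ, ‖a (k + l)‖ ^ 2) ≤
      Real.sqrt (s / (s - 1)) *
        Real.sqrt (∑' n : ℕ, (1 + (n : ℝ)) ^ (2 * s) * ‖a n‖ ^ 2) := by
  set S : ℝ := ∑' n : ℕ, (1 + (n : ℝ)) ^ (2 * s) * ‖a n‖ ^ 2 with hS_def
  set h : ℕ → ℝ := fun n => (1 + (n : ℝ)) ^ (2 * s - 1) * ‖a n‖ ^ 2 with hh_def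
  have hb : Summable fun n : ℕ => ‖a n‖ ^ 2 := by
    refine Summable.of_nonneg_of_le (fun n => by positivity) (fun n => ?_) hsum
    exact le_mul_of_one_le_left (by positivity)
      (Real.one_le_rpow (le_add_of_nonneg_right (Nat.cast_nonneg n)) (by linarith))
  have hkey : ∀ n : ℕ, (1 + (n : ℝ)) * h n = (1 + (n : ℝ)) ^ (2 * s) * ‖a n‖ ^ 2 := by
    intro n
    have hpos : (0:ℝ) < 1 + n := by positivity
    rw [hh_def]
    rw [show (2 * s) = 1 + (2 * s - 1) by ring, Real.rpow_add hpos, Real.rpow_one]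
    ring
  have hS : Summable fun n : ℕ => (1 + (n : ℝ)) * h n := by
    simp only [hkey]; exact hsum
  have hSval : ∑' n : ℕ, (1 + (n : ℝ)) * h n = S := by
    rw [hS_def]; exact tsum_congr hkey
  have hh : Summable h := by
    refine Summable.of_nonneg_of_le (fun n => by positivity) (fun n => ?_) hS
    exact le_mul_of_one_le_left (by positivity) (le_add_of_nonneg_right (Nat.cast_nonneg n))
  have hbk : ∀ k : ℕ, Summable fun l : ℕ => ‖a (k + l)‖ ^ 2 := fun k =>
    ((summable_nat_add_iff k).2 hb).congr (fun l => by rw [add_comm])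
  have hhk : ∀ k : ℕ, Summable fun l : ℕ => h (k + l) := fun k =>
    ((summable_nat_add_iff k).2 hh).congr (fun l => by rw [add_comm])
  set c : ℕ → ℝ := fun k => ∑' l : ℕ, ‖a (k + l)‖ ^ 2 with hc_def
  have hcnn : ∀ k, 0 ≤ c k := fun k => tsum_nonneg (fun l => by positivity)
  set W : ℕ → ℝ := fun k => ∑' l : ℕ, h (k + l) with hW_def
  -- Step A : (1+k)^(2s-1) * c k ≤ W k
  have hA : ∀ k : ℕ, (1 + (k : ℝ)) ^ (2 * s - 1) * c k ≤ W k := by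
    intro k
    rw [hc_def, ← tsum_mul_left]
    refine Summable.tsum_le_tsum (fun l => ?_) ((hbk k).mul_left _) (hhk k)
    refine mul_le_mul_of_nonneg_right ?_ (by positivity)
    refine Real.rpow_le_rpow (by positivity) ?_ (by linarith)
    push_cast
    linarith [Nat.cast_nonneg (α := ℝ) l]
  -- Step B : partial sums of W are bounded by S
  have hWeq : ∀ k : ℕ, W k = ∑' n : ℕ, (Set.Ici k).indicator h n := by
    intro k
    have h1 : W k = ∑' l : ℕ, (Set.Ici k).indicator h (k + l) := by
      refine tsum_congr fun l => ?_
      rw [Set.indicator_of_mem (Set.mem_Ici.2 (Nat.le_add_right k l)) h]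
    rw [h1]
    exact Function.Injective.tsum_eq (fun x y hxy => by omega)
      (fun n hn => by
        have : k ≤ n := Set.mem_Ici.1 (Set.support_indicator_subset hn)
        exact ⟨n - k, by omega⟩)
  have hB : ∀ N : ℕ, ∑ k ∈ Finset.range N, W k ≤ S := by
    intro N
    have hswap : ∑ k ∈ Finset.range N, W k =
        ∑' n : ℕ, ∑ k ∈ Finset.range N, (Set.Ici k).indicator h n := by
      simp only [hWeq]
      exact (Summable.tsum_finsetSum (fun k _ => hh.indicator _)).symm
    rw [hswap, ← hSval]
    refine Summable.tsum_le_tsum (fun n => ?_) (summable_sum (fun k _ => hh.indicator _)) hS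
    have hnn : 0 ≤ h n := by positivity
    calc ∑ k ∈ Finset.range N, (Set.Ici k).indicator h n
        = ∑ k ∈ (Finset.range N).filter (fun k => k ≤ n), h n := by
          rw [Finset.sum_filter]
          refine Finset.sum_congr rfl fun k _ => ?_
          by_cases hk : k ≤ n
          · rw [if_pos hk, Set.indicator_of_mem (Set.mem_Ici.2 hk)]
          · rw [if_neg hk, Set.indicator_of_notMem (fun hmem => hk (Set.mem_Ici.1 hmem))]
      _ = (((Finset.range N).filter (fun k => k ≤ n)).card : ℝ) * h n := by
          rw [Finset.sum_const, nsmul_eq_mul]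
      _ ≤ (1 + (n : ℝ)) * h n := by
          refine mul_le_mul_of_nonneg_right ?_ hnn
          have hcard : ((Finset.range N).filter (fun k => k ≤ n)).card ≤ n + 1 := by
            calc ((Finset.range N).filter (fun k => k ≤ n)).card
                ≤ (Finset.range (n + 1)).card := by
                  refine Finset.card_le_card fun k hk => ?_
                  rw [Finset.mem_range]
                  have := (Finset.mem_filter.1 hk).2
                  omega
              _ = n + 1 := Finset.card_range _
          calc (((Finset.range N).filter (fun k => k ≤ n)).card : ℝ)
              ≤ ((n + 1 : ℕ) : ℝ) := by exact_mod_cast hcard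
            _ = 1 + (n : ℝ) := by push_cast; ring
  -- Step C : zeta bound
  have hC : ∀ N : ℕ, ∑ k ∈ Finset.range N, (1 + (k : ℝ)) ^ (1 - 2 * s) ≤ s / (s - 1) := by
    intro N
    have h1 := zeta_partial_bound (p := 2 * s - 1) (by linarith) N
    have h2 : ∑ k ∈ Finset.range N, (1 + (k : ℝ)) ^ (1 - 2 * s) =
        ∑ k ∈ Finset.range N, (1 + (k : ℝ)) ^ (-(2 * s - 1)) := by
      refine Finset.sum_congr rfl fun k _ => ?_
      norm_num
    rw [h2]
    refine h1.trans ?_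
    rw [div_le_div_iff₀ (by linarith) (by linarith)]
    nlinarith
  have hSnn : 0 ≤ S := tsum_nonneg fun n => by positivity
  -- Final step
  refine Real.tsum_le_of_sum_range_le (fun k => Real.sqrt_nonneg _) (fun N => ?_)
  have hCS : (∑ k ∈ Finset.range N, Real.sqrt (c k)) ^ 2 ≤
      (∑ k ∈ Finset.range N, (1 + (k : ℝ)) ^ (1 - 2 * s)) *
        ∑ k ∈ Finset.range N, (1 + (k : ℝ)) ^ (2 * s - 1) * c k := by
    refine Finset.sum_sq_le_sum_mul_sum_of_sq_eq_mul _
      (fun k _ => by positivity) (fun k _ => mul_nonneg (by positivity) (hcnn k))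
      (fun k _ => ?_)
    rw [Real.sq_sqrt (hcnn k), ← mul_assoc, ← Real.rpow_add (by positivity),
      show (1 - 2 * s) + (2 * s - 1) = 0 by ring, Real.rpow_zero, one_mul]
  have hBsum : ∑ k ∈ Finset.range N, (1 + (k : ℝ)) ^ (2 * s - 1) * c k ≤ S :=
    le_trans (Finset.sum_le_sum fun k _ => hA k) (hB N)
  have hsum_nn : 0 ≤ ∑ k ∈ Finset.range N, Real.sqrt (c k) :=
    Finset.sum_nonneg fun k _ => Real.sqrt_nonneg _
  have hAnn : 0 ≤ ∑ k ∈ Finset.range N, (1 + (k : ℝ)) ^ (1 - 2 * s) :=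
    Finset.sum_nonneg fun k _ => by positivity
  calc ∑ k ∈ Finset.range N, Real.sqrt (c k)
      = Real.sqrt ((∑ k ∈ Finset.range N, Real.sqrt (c k)) ^ 2) := by
        rw [Real.sqrt_sq hsum_nn]
    _ ≤ Real.sqrt ((∑ k ∈ Finset.range N, (1 + (k : ℝ)) ^ (1 - 2 * s)) *
          ∑ k ∈ Finset.range N, (1 + (k : ℝ)) ^ (2 * s - 1) * c k) :=
        Real.sqrt_le_sqrt hCS
    _ = Real.sqrt (∑ k ∈ Finset.range N, (1 + (k : ℝ)) ^ (1 - 2 * s)) *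
          Real.sqrt (∑ k ∈ Finset.range N, (1 + (k : ℝ)) ^ (2 * s - 1) * c k) :=
        Real.sqrt_mul hAnn _
    _ ≤ Real.sqrt (s / (s - 1)) * Real.sqrt S := by
        refine mul_le_mul (Real.sqrt_le_sqrt (hC N)) (Real.sqrt_le_sqrt hBsum)
          (Real.sqrt_nonneg _) (Real.sqrt_nonneg _)
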